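/- Let 𝐪 be a positive real number with 𝐪 ≠ 1, and let t, u be real numbers with t·𝐪^i ≠ 1 and u·𝐪^i ≠ 1 for every integer i ≥ 0. Let (a_{2n})_{n≥1}, (κ_{2ℓ})_{ℓ≥1}, (m_{2k})_{k≥1} be real sequences satisfying the formal power series identities exp_{𝐪^{−1/2}}[ Σ_{ℓ≥1} (κ_{2ℓ}/[ℓ]_𝐪) 𝐪^{ℓ−1/2} z^{2ℓ} ] = 1 + Σ_{n≥1} a_{2n} ((1−𝐪)^{2n}/((t;𝐪)_n (u;𝐪)_n)) 𝐪^{n²−3n/2} z^{2n} and exp_{𝐪^{−1/2}}[ ((1−t)/(1−𝐪)) Σ_{k≥1} (m_{2k}/[k]_𝐪) z^{2k} ] = 1 + Σ_{n≥1} a_{2n} z^{2n} in ℝ[[z]], where the 𝐪^{−1/2}-composition exp_{𝐪^{−1/2}}[·] is used. Then for every k ≥ 1: m_{2k} = 𝐪^{1/2} · [z^0] ( 𝐪·Δ_{𝐪;t,u} T_{𝐪^{−1/2}} + 𝐪^{1/2}·*_g T_{𝐪^{−1/2}} )^{2k−1} ( g(z) ), where g(z) := Σ_{ℓ≥1} κ_{2ℓ}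 z^{2ℓ−1}, T_{𝐪^{−1/2}} is the substitution operator (T_{𝐪^{−1/2}} f)(z) := f(𝐪^{−1/2} z), *_g is multiplication by g(z), [z^0] f is the constant term of f, and Δ_{𝐪;t,u} is the unique linear operator on ℝ[[z]] with Δ_{𝐪;t,u} z^{2n+1} = ((1 − u𝐪^n)/(1−𝐪)) z^{2n} for n ≥ 0, Δ_{𝐪;t,u} z^{2n} = ((1 − t𝐪^n)/(1−𝐪)) z^{2n−1} for n ≥ 1, and Δ_{𝐪;t,u} 1 = 0. -/

import Mathlib

open Finset

/-- The `𝐩`-number `[n]_𝐩 = (1-𝐩^n)/(1-𝐩)`. -/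
noncomputable def qNum (p : ℝ) (n : ℕ) : ℝ := (1 - p ^ n) / (1 - p)

/-- The `𝐩`-factorial `n!_𝐩 = [1]_𝐩 ⋯ [n]_𝐩`. -/
noncomputable def qFact (p : ℝ) (n : ℕ) : ℝ := ∏ i ∈ Finset.Icc 1 n, qNum p i

/-- The `𝐩`-Pochhammer symbol `(t;𝐩)_n = Π_{i=0}^{n-1} (1 - t𝐩^i)`. -/
noncomputable def qPoch (p t : ℝ) (n : ℕ) : ℝ := ∏ i ∈ Finset.range n, (1 - t * p ^ i)

/-- The `𝐩`-derivative `D_𝐩` on `ℝ[[z]]`: `D_𝐩 z^n = [n]_𝐩 z^{n-1}`. -/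
noncomputable def qDeriv (p : ℝ) (f : PowerSeries ℝ) : PowerSeries ℝ :=
  PowerSeries.mk fun j => qNum p (j + 1) * PowerSeries.coeff (j + 1) f

/-- The `𝐩`-antiderivative (with zero constant term): the unique `F` with zero constant
term and `D_𝐩 F = g` (when all `[j]_𝐩 ≠ 0`). -/
noncomputable def qInteg (p : ℝ) (g : PowerSeries ℝ) : PowerSeries ℝ :=
  PowerSeries.mk fun j => if j = 0 then 0 else PowerSeries.coeff (j - 1) g / qNum p j

/-- The `𝐩`-symbolic powers `f^{𝐩;[k]}`: `f^{𝐩;[0]} = 1` and `f^{𝐩;[k]}` is the series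
with zero constant term satisfying `D_𝐩 f^{𝐩;[k]} = [k]_𝐩 f^{𝐩;[k-1]} D_𝐩 f`. -/
noncomputable def qSymbPow (p : ℝ) (f : PowerSeries ℝ) : ℕ → PowerSeries ℝ
  | 0 => 1
  | k + 1 => qInteg p (qNum p (k + 1) • (qSymbPow p f k * qDeriv p f))

/-- The `𝐩`-exponential composition `exp_𝐩[f] = Σ_{n≥0} f^{𝐩;[n]}/n!_𝐩`, for `f` with zero
constant term (then `f^{𝐩;[n]}` has no terms of degree `< n`, so the sum makes sense). -/
noncomputable def qExpComp (p : ℝ) (f : PowerSeries ℝ) : PowerSeries ℝ :=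
  PowerSeries.mk fun j =>
    ∑ n ∈ Finset.range (j + 1), PowerSeries.coeff j (qSymbPow p f n) / qFact p n


/-- The series `g(z) = Σ_{ℓ≥1} κ_{2ℓ} z^{2ℓ-1}` (where `κ ℓ` stands for `κ_{2ℓ}`). -/
noncomputable def gSeries (κ : ℕ → ℝ) : PowerSeries ℝ :=
  PowerSeries.mk fun j => if j % 2 = 1 then κ ((j + 1) / 2) else 0

/-- The argument `Σ_{ℓ≥1} (κ_{2ℓ}/[ℓ]_qq) qq^{ℓ-1/2} z^{2ℓ}` of the first exponential. -/
noncomputable def qCumulantArg (qq : ℝ) (κ : ℕ → ℝ) : PowerSeries ℝ :=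
  PowerSeries.mk fun j =>
    if j ≠ 0 ∧ j % 2 = 0 then κ (j / 2) / qNum qq (j / 2) * qq ^ (j / 2) / Real.sqrt qq else 0

/-- The series `1 + Σ_{n≥1} a_{2n} ((1-qq)^{2n}/((t;qq)_n (u;qq)_n)) qq^{n²-3n/2} z^{2n}`
(where `a n` stands for `a_{2n}` and `qq^{n²-3n/2} = qq^{n²}/(√qq)^{3n}`). -/
noncomputable def qCoeffSeriesTU (qq t u : ℝ) (a : ℕ → ℝ) : PowerSeries ℝ :=
  PowerSeries.mk fun j =>
    if j = 0 then 1
    else if j % 2 = 0 then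
      a (j / 2) * ((1 - qq) ^ j / (qPoch qq t (j / 2) * qPoch qq u (j / 2))) *
        (qq ^ ((j / 2) ^ 2) / Real.sqrt qq ^ (3 * (j / 2)))
    else 0

/-- The argument `((1-t)/(1-qq)) Σ_{k≥1} (m_{2k}/[k]_qq) z^{2k}` of the second exponential. -/
noncomputable def qMomentArg (qq t : ℝ) (m : ℕ → ℝ) : PowerSeries ℝ :=
  PowerSeries.mk fun j =>
    if j ≠ 0 ∧ j % 2 = 0 then (1 - t) / (1 - qq) * (m (j / 2) / qNum qq (j / 2)) else 0

/-- The series `1 + Σ_{n≥1} a_{2n} z^{2n}`. -/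
noncomputable def qCoeffSeries (a : ℕ → ℝ) : PowerSeries ℝ :=
  PowerSeries.mk fun j =>
    if j = 0 then 1 else if j % 2 = 0 then a (j / 2) else 0

/-- The operator `Δ_{qq;t,u}` on `ℝ[[z]]`: `Δ z^{2n+1} = ((1-uqq^n)/(1-qq)) z^{2n}` for `n ≥ 0`,
`Δ z^{2n} = ((1-tqq^n)/(1-qq)) z^{2n-1}` for `n ≥ 1`, and `Δ 1 = 0`. -/
noncomputable def DeltaQTU (qq t u : ℝ) (f : PowerSeries ℝ) : PowerSeries ℝ :=
  PowerSeries.mk fun j =>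
    if j % 2 = 0 then (1 - u * qq ^ (j / 2)) / (1 - qq) * PowerSeries.coeff (j + 1) f
    else (1 - t * qq ^ ((j + 1) / 2)) / (1 - qq) * PowerSeries.coeff (j + 1) f

lemma qNum_ne_zero {p : ℝ} (hp : 0 < p) (hp1 : p ≠ 1) (j : ℕ) (hj : j ≠ 0) : qNum p j ≠ 0 := by
  have h1 : p ^ j ≠ 1 := by
    rcases lt_or_gt_of_ne hp1 with h | h
    · exact ne_of_lt (pow_lt_one₀ hp.le h hj)
    · exact ne_of_gt (one_lt_pow₀ h hj)
  exact div_ne_zero (sub_ne_zero.mpr (Ne.symm h1)) (sub_ne_zero.mpr (Ne.symm hp1))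

lemma qFact_ne_zero {p : ℝ} (hp : 0 < p) (hp1 : p ≠ 1) (n : ℕ) : qFact p n ≠ 0 := by
  rw [qFact]
  apply Finset.prod_ne_zero_iff.mpr
  intro i hi
  exact qNum_ne_zero hp hp1 i (by have := (Finset.mem_Icc.mp hi).1; omega)

lemma coeff_qDeriv (p : ℝ) (f : PowerSeries ℝ) (j : ℕ) :
    PowerSeries.coeff j (qDeriv p f) = qNum p (j+1) * PowerSeries.coeff (j+1) f := by
  simp [qDeriv]

lemma qDeriv_qInteg {p : ℝ} (hp : 0 < p) (hp1 : p ≠ 1) (g : PowerSeries ℝ) :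
    qDeriv p (qInteg p g) = g := by
  ext j
  simp only [qDeriv, qInteg, PowerSeries.coeff_mk, Nat.succ_ne_zero, if_false,
    Nat.add_sub_cancel]
  rw [mul_div_cancel₀ _ (qNum_ne_zero hp hp1 (j+1) (Nat.succ_ne_zero j))]

lemma qDeriv_qSymbPow {p : ℝ} (hp : 0 < p) (hp1 : p ≠ 1) (f : PowerSeries ℝ) (k : ℕ) :
    qDeriv p (qSymbPow p f (k+1)) = qNum p (k+1) • (qSymbPow p f k * qDeriv p f) := by
  show qDeriv p (qInteg p _) = _
  rw [qDeriv_qInteg hp hp1]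

lemma coeff_qSymbPow_eq_zero (p : ℝ) (f : PowerSeries ℝ) :
    ∀ n j, j < n → PowerSeries.coeff j (qSymbPow p f n) = 0 := by
  intro n
  induction n with
  | zero => intro j hj; omega
  | succ n ih =>
    intro j hj
    show PowerSeries.coeff j (qInteg p _) = 0
    rw [qInteg, PowerSeries.coeff_mk]
    rcases Nat.eq_zero_or_pos j with h0 | hpos
    · simp [h0]
    rw [if_neg (Nat.pos_iff_ne_zero.mp hpos)]
    have hz : PowerSeries.coeff (j-1) (qNum p (n+1) • (qSymbPow p f n * qDeriv p f)) = 0 := by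
      rw [LinearMap.map_smul, smul_eq_mul, PowerSeries.coeff_mul,
        Finset.Nat.sum_antidiagonal_eq_sum_range_succ_mk]
      have hterm : ∀ k ∈ Finset.range (j-1+1),
          PowerSeries.coeff k (qSymbPow p f n) * PowerSeries.coeff (j-1-k) (qDeriv p f) = 0 := by
        intro k hk
        rw [ih k (by simp at hk; omega), zero_mul]
      rw [Finset.sum_congr rfl hterm, Finset.sum_const_zero, mul_zero]
    rw [hz, zero_div]

lemma qDeriv_qExpComp {p : ℝ} (hp : 0 < p) (hp1 : p ≠ 1) (f : PowerSeries ℝ) :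
    qDeriv p (qExpComp p f) = qDeriv p f * qExpComp p f := by
  ext j
  rw [coeff_qDeriv]
  rw [show PowerSeries.coeff (j+1) (qExpComp p f) =
      ∑ n ∈ Finset.range (j+2), PowerSeries.coeff (j+1) (qSymbPow p f n) / qFact p n from by
    simp [qExpComp]]
  rw [Finset.mul_sum, Finset.sum_range_succ']
  have h0 : qNum p (j+1) * (PowerSeries.coeff (j+1) (qSymbPow p f 0) / qFact p 0) = 0 := by
    show qNum p (j+1) * (PowerSeries.coeff (j+1) (1 : PowerSeries ℝ) / qFact p 0) = 0
    rw [PowerSeries.coeff_one, if_neg (Nat.succ_ne_zero j)]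
    simp
  rw [h0, add_zero]
  have hterm : ∀ n ∈ Finset.range (j+1),
      qNum p (j+1) * (PowerSeries.coeff (j+1) (qSymbPow p f (n+1)) / qFact p (n+1)) =
      PowerSeries.coeff j (qSymbPow p f n * qDeriv p f) / qFact p n := by
    intro n _
    have hD : qNum p (j+1) * PowerSeries.coeff (j+1) (qSymbPow p f (n+1)) =
        qNum p (n+1) * PowerSeries.coeff j (qSymbPow p f n * qDeriv p f) := by
      have h := congrArg (PowerSeries.coeff j) (qDeriv_qSymbPow hp hp1 f n)
      rw [coeff_qDeriv, LinearMap.map_smul, smul_eq_mul] at h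
      exact h
    have hF : qFact p (n+1) = qFact p n * qNum p (n+1) := by
      rw [qFact, qFact, Finset.prod_Icc_succ_top (Nat.le_add_left 1 n)]
    have hFn := qFact_ne_zero hp hp1 n
    have hNn := qNum_ne_zero hp hp1 (n+1) (Nat.succ_ne_zero n)
    rw [hF]
    field_simp
    linear_combination hD
  rw [Finset.sum_congr rfl hterm]
  rw [PowerSeries.coeff_mul, Finset.Nat.sum_antidiagonal_eq_sum_range_succ_mk]
  have hE : ∀ k ∈ Finset.range (j+1),
      PowerSeries.coeff k (qDeriv p f) * PowerSeries.coeff (j-k) (qExpComp p f) =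
      ∑ n ∈ Finset.range (j+1),
        PowerSeries.coeff k (qDeriv p f) * (PowerSeries.coeff (j-k) (qSymbPow p f n) / qFact p n) := by
    intro k hk
    rw [show PowerSeries.coeff (j-k) (qExpComp p f) =
        ∑ n ∈ Finset.range (j-k+1), PowerSeries.coeff (j-k) (qSymbPow p f n) / qFact p n from by
      simp [qExpComp]]
    rw [Finset.mul_sum]
    apply Finset.sum_subset
    · apply Finset.range_subset_range.mpr; simp at hk; omega
    · intro n _ hnn
      rw [coeff_qSymbPow_eq_zero p f n (j-k) (by simp at hnn ⊢; omega), zero_div, mul_zero]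
  rw [Finset.sum_congr rfl hE, Finset.sum_comm]
  apply Finset.sum_congr rfl
  intro n _
  rw [mul_comm (qSymbPow p f n), PowerSeries.coeff_mul,
    Finset.Nat.sum_antidiagonal_eq_sum_range_succ_mk, Finset.sum_div]
  apply Finset.sum_congr rfl
  intro k _
  rw [mul_div_assoc]
noncomputable def gco (κ : ℕ → ℝ) (x : ℕ) : ℝ := if x % 2 = 1 then κ ((x + 1) / 2) else 0

noncomputable def dwf (s t u : ℝ) (i : ℕ) : ℝ :=
  s^2 * (s⁻¹)^i * ((if i % 2 = 1 then 1 - u*(s^2)^((i-1)/2) else 1 - t*(s^2)^(i/2)) / (1-s^2))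

noncomputable def Wf (s t u : ℝ) (κ : ℕ → ℝ) : ℕ → ℕ → ℝ
  | 0, i => if i = 0 then 1 else 0
  | (j+1), i => (if i = 0 then 0 else dwf s t u i * Wf s t u κ j (i-1))
      + ∑ l ∈ Finset.range (j+1), s * (s⁻¹)^i * κ (l+1) * Wf s t u κ j (i + 2*l + 1)

lemma Wf_zero (s t u : ℝ) (κ : ℕ → ℝ) (i : ℕ) :
    Wf s t u κ 0 i = if i = 0 then 1 else 0 := by simp [Wf]

lemma Wf_succ (s t u : ℝ) (κ : ℕ → ℝ) (j i : ℕ) :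
    Wf s t u κ (j+1) i = (if i = 0 then 0 else dwf s t u i * Wf s t u κ j (i-1))
      + ∑ l ∈ Finset.range (j+1), s * (s⁻¹)^i * κ (l+1) * Wf s t u κ j (i + 2*l + 1) := by
  simp [Wf]

lemma Wf_vanish (s t u : ℝ) (κ : ℕ → ℝ) : ∀ j i, j < i → Wf s t u κ j i = 0 := by
  intro j
  induction j with
  | zero => intro i hi; rw [Wf_zero, if_neg (by omega)]
  | succ j ih =>
    intro i hi
    rw [Wf_succ]
    rw [if_neg (by omega), ih (i-1) (by omega)]
    rw [mul_zero]
    have : ∀ l ∈ Finset.range (j+1), s * (s⁻¹)^i * κ (l+1) * Wf s t u κ j (i + 2*l + 1) = 0 := by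
      intro l _
      rw [ih (i + 2*l + 1) (by omega), mul_zero]
    rw [Finset.sum_congr rfl this, Finset.sum_const_zero, add_zero]

lemma sumRange2 (M : ℕ) (f : ℕ → ℝ) :
    ∑ x ∈ Finset.range (2*M), f x = ∑ l ∈ Finset.range M, (f (2*l) + f (2*l+1)) := by
  induction M with
  | zero => simp
  | succ M ih =>
    rw [show 2*(M+1) = (2*M+1)+1 by ring, Finset.sum_range_succ, Finset.sum_range_succ,
      Finset.sum_range_succ, ih]
    ring

lemma coeff_Delta (q t u : ℝ) (f : PowerSeries ℝ) (i : ℕ) :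
    PowerSeries.coeff i (DeltaQTU q t u f) =
      (if i % 2 = 0 then (1-u*q^(i/2))/(1-q) else (1-t*q^((i+1)/2))/(1-q)) *
        PowerSeries.coeff (i+1) f := by
  simp only [DeltaQTU, PowerSeries.coeff_mk]
  split <;> rfl

lemma coeff_gSeries (κ : ℕ → ℝ) (x : ℕ) :
    PowerSeries.coeff x (gSeries κ) = gco κ x := by
  simp [gSeries, gco]

lemma gco_even (κ : ℕ → ℝ) (x : ℕ) (hx : x % 2 = 0) : gco κ x = 0 := by
  simp [gco, hx]

lemma gsum (s t u : ℝ) (κ : ℕ → ℝ) (j y : ℕ) (hy : y ≤ j) :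
    ∑ i ∈ Finset.range (j+1), Wf s t u κ j i * gco κ (i-y)
      = ∑ l ∈ Finset.range (j+1), κ (l+1) * Wf s t u κ j (y+2*l+1) := by
  rw [← Finset.sum_range_add_sum_Ico _ (show y ≤ j+1 by omega)]
  have h1 : ∑ i ∈ Finset.range y, Wf s t u κ j i * gco κ (i-y) = 0 := by
    apply Finset.sum_eq_zero
    intro i hi
    rw [show i - y = 0 by simp at hi; omega, gco_even κ 0 (by norm_num), mul_zero]
  rw [h1, zero_add, Finset.sum_Ico_eq_sum_range]
  have h2 : ∀ x ∈ Finset.range (j+1-y), Wf s t u κ j (y+x) * gco κ ((y+x)-y)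
      = Wf s t u κ j (y+x) * gco κ x := by
    intro x _; rw [Nat.add_sub_cancel_left]
  rw [Finset.sum_congr rfl h2]
  rw [show (∑ x ∈ Finset.range (j+1-y), Wf s t u κ j (y+x) * gco κ x)
      = ∑ x ∈ Finset.range (2*(j+1)), Wf s t u κ j (y+x) * gco κ x from by
    apply Finset.sum_subset
    · apply Finset.range_subset_range.mpr; omega
    · intro x _ hx
      rw [Wf_vanish s t u κ j (y+x) (by simp at hx ⊢; omega), zero_mul]]
  rw [sumRange2]
  apply Finset.sum_congr rfl
  intro l _
  rw [gco_even κ (2*l) (by omega), mul_zero, zero_add]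
  have : gco κ (2*l+1) = κ (l+1) := by
    simp only [gco, if_pos (by omega : (2*l+1) % 2 = 1)]
    congr 1
    omega
  rw [this, show y + (2*l+1) = y + 2*l + 1 by ring]
  ring

lemma opIter (s t u : ℝ) (κ : ℕ → ℝ) (j : ℕ) (f : PowerSeries ℝ) :
    PowerSeries.constantCoeff
      ((fun f => (s^2 : ℝ) • DeltaQTU (s^2) t u (PowerSeries.rescale s⁻¹ f) +
          s • (gSeries κ * PowerSeries.rescale s⁻¹ f))^[j] f) =
    ∑ i ∈ Finset.range (j+1), Wf s t u κ j i * PowerSeries.coeff i f := by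
  induction j generalizing f with
  | zero =>
    rw [Function.iterate_zero_apply, Finset.sum_range_one, Wf_zero, if_pos rfl, one_mul,
      PowerSeries.coeff_zero_eq_constantCoeff]
  | succ j ih =>
    rw [Function.iterate_succ_apply, ih]
    have hcoeff : ∀ i : ℕ, PowerSeries.coeff i
        ((s^2 : ℝ) • DeltaQTU (s^2) t u (PowerSeries.rescale s⁻¹ f) +
          s • (gSeries κ * PowerSeries.rescale s⁻¹ f)) =
        dwf s t u (i+1) * PowerSeries.coeff (i+1) f +
        ∑ y ∈ Finset.range (i+1), s * (s⁻¹)^y * gco κ (i-y) * PowerSeries.coeff y f := by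
      intro i
      rw [map_add, PowerSeries.coeff_smul, PowerSeries.coeff_smul, smul_eq_mul, smul_eq_mul]
      congr 1
      · rw [coeff_Delta, PowerSeries.coeff_rescale, dwf]
        rcases Nat.mod_two_eq_zero_or_one i with h | h
        · rw [if_pos h, if_pos (by omega : (i+1) % 2 = 1), show ((i+1)-1)/2 = i/2 by omega]
          ring
        · rw [if_neg (by omega : ¬ i % 2 = 0), if_neg (by omega : ¬ (i+1) % 2 = 1)]
          ring
      · rw [mul_comm (gSeries κ), PowerSeries.coeff_mul,
          Finset.Nat.sum_antidiagonal_eq_sum_range_succ_mk, Finset.mul_sum]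
        apply Finset.sum_congr rfl
        intro y _
        rw [PowerSeries.coeff_rescale, coeff_gSeries]
        ring
    rw [Finset.sum_congr rfl (fun i _ => by rw [hcoeff i, mul_add])]
    rw [Finset.sum_add_distrib]
    have hdown : ∑ i ∈ Finset.range (j+1), Wf s t u κ j i * (dwf s t u (i+1) * PowerSeries.coeff (i+1) f)
        = ∑ i ∈ Finset.range (j+2),
            (if i = 0 then 0 else dwf s t u i * Wf s t u κ j (i-1)) * PowerSeries.coeff i f := by
      rw [Finset.sum_range_succ' (fun i => (if i = 0 then 0 else dwf s t u i * Wf s t u κ j (i-1)) * PowerSeries.coeff i f) (j+1)]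
      simp only [if_true, Nat.add_sub_cancel, zero_mul, add_zero]
      apply Finset.sum_congr rfl
      intro i _
      rw [if_neg (Nat.succ_ne_zero i)]
      ring
    have hup : ∑ i ∈ Finset.range (j+1), Wf s t u κ j i *
          (∑ y ∈ Finset.range (i+1), s * (s⁻¹)^y * gco κ (i-y) * PowerSeries.coeff y f)
        = ∑ i ∈ Finset.range (j+2),
            (∑ l ∈ Finset.range (j+1), s * (s⁻¹)^i * κ (l+1) * Wf s t u κ j (i + 2*l + 1)) *
              PowerSeries.coeff i f := by
      have hinner : ∀ i ∈ Finset.range (j+1), Wf s t u κ j i *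
            (∑ y ∈ Finset.range (i+1), s * (s⁻¹)^y * gco κ (i-y) * PowerSeries.coeff y f)
          = ∑ y ∈ Finset.range (j+1), Wf s t u κ j i * (s * (s⁻¹)^y * gco κ (i-y) * PowerSeries.coeff y f) := by
        intro i hi
        rw [Finset.mul_sum]
        apply Finset.sum_subset
        · apply Finset.range_subset_range.mpr; simp at hi; omega
        · intro y _ hy
          rw [show i - y = 0 by simp at hy; omega, gco_even κ 0 (by norm_num)]
          ring
      rw [Finset.sum_congr rfl hinner, Finset.sum_comm]
      rw [Finset.sum_range_succ
        (fun i => (∑ l ∈ Finset.range (j+1), s * (s⁻¹)^i * κ (l+1) * Wf s t u κ j (i + 2*l + 1)) * PowerSeries.coeff i f)]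
      have hlast : (∑ l ∈ Finset.range (j+1), s * (s⁻¹)^(j+1) * κ (l+1) * Wf s t u κ j ((j+1) + 2*l + 1)) *
          PowerSeries.coeff (j+1) f = 0 := by
        rw [Finset.sum_eq_zero, zero_mul]
        intro l _
        rw [Wf_vanish s t u κ j ((j+1)+2*l+1) (by omega), mul_zero]
      rw [hlast, add_zero]
      apply Finset.sum_congr rfl
      intro y hy
      have := gsum s t u κ j y (by simp at hy; omega)
      calc ∑ i ∈ Finset.range (j+1), Wf s t u κ j i * (s * (s⁻¹)^y * gco κ (i-y) * PowerSeries.coeff y f)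
          = (∑ i ∈ Finset.range (j+1), Wf s t u κ j i * gco κ (i-y)) * (s * (s⁻¹)^y * PowerSeries.coeff y f) := by
            rw [Finset.sum_mul]
            apply Finset.sum_congr rfl
            intro i _
            ring
        _ = (∑ l ∈ Finset.range (j+1), κ (l+1) * Wf s t u κ j (y+2*l+1)) * (s * (s⁻¹)^y * PowerSeries.coeff y f) := by rw [this]
        _ = (∑ l ∈ Finset.range (j+1), s * (s⁻¹)^y * κ (l+1) * Wf s t u κ j (y + 2*l + 1)) * PowerSeries.coeff y f := by
            rw [Finset.sum_mul, Finset.sum_mul]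
            apply Finset.sum_congr rfl
            intro l _
            ring
    rw [hdown, hup, ← Finset.sum_add_distrib]
    apply Finset.sum_congr rfl
    intro i _
    rw [Wf_succ]
    ring
noncomputable def wf (s t u : ℝ) : ℕ → ℝ
  | 0 => 1
  | (m+1) => wf s t u m * (1 - t*(s^2)^(m+1)) * (1 - u*(s^2)^m) * s^3 / ((1-s^2)^2 * (s^2)^(2*m+1))

noncomputable def w'f (s t u : ℝ) (m : ℕ) : ℝ :=
  wf s t u m * s * (1 - u*(s^2)^m) / ((1-s^2) * (s^2)^m)

noncomputable def Aco (s t u : ℝ) (a : ℕ → ℝ) (c : ℕ) : ℝ :=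
  if c = 0 then 1
  else a c * ((1-s^2)^(2*c) / (qPoch (s^2) t c * qPoch (s^2) u c)) * ((s^2)^(c^2) / s^(3*c))

lemma pow_ne_one_aux {x : ℝ} (hx : 0 < x) (hx1 : x ≠ 1) {n : ℕ} (hn : n ≠ 0) : x^n ≠ 1 := by
  rcases lt_or_gt_of_ne hx1 with h | h
  · exact ne_of_lt (pow_lt_one₀ hx.le h hn)
  · exact ne_of_gt (one_lt_pow₀ h hn)

section Scalars
variable {s t u : ℝ} (hs : 0 < s) (hs1 : s ≠ 1)

lemma hs0' (hs : 0 < s) : s ≠ 0 := ne_of_gt hs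

lemma hq1' (hs : 0 < s) (hs1 : s ≠ 1) : (1:ℝ) - s^2 ≠ 0 := by
  intro h
  have h2 : (s-1)*(s+1) = 0 := by linear_combination -h
  rcases mul_eq_zero.mp h2 with h3 | h3
  · exact hs1 (by linarith)
  · linarith

lemma hqpow' (hs : 0 < s) (hs1 : s ≠ 1) (M : ℕ) (hM : M ≠ 0) : (1:ℝ) - (s^2)^M ≠ 0 := by
  have : (s^2:ℝ) ≠ 1 := fun h => hq1' hs hs1 (by linarith)
  have := pow_ne_one_aux (by positivity : (0:ℝ) < s^2) this hM
  exact sub_ne_zero.mpr (Ne.symm this)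

lemma qNum_inv_eq (hs : 0 < s) (hs1 : s ≠ 1) (j : ℕ) :
    qNum s⁻¹ j = (1-(s⁻¹)^j) * (s/(s-1)) := by
  have hs0 : s ≠ 0 := ne_of_gt hs
  have hsm : s - 1 ≠ 0 := sub_ne_zero.mpr hs1
  rw [qNum]
  rw [show 1 - s⁻¹ = (s-1)/s by field_simp]
  rw [div_div_eq_mul_div, mul_div_assoc]

lemma Rw2 (hs : 0 < s) (hs1 : s ≠ 1) (r : ℕ) :
    w'f s t u r * (1 - t*(s^2)^(r+1)) = wf s t u (r+1) * ((1-s^2) * (s^2)^r) := by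
  have hs0 : s ≠ 0 := ne_of_gt hs
  have h1 := hq1' hs hs1
  show wf s t u r * s * (1 - u*(s^2)^r) / ((1-s^2) * (s^2)^r) * (1 - t*(s^2)^(r+1)) =
    wf s t u r * (1 - t*(s^2)^(r+1)) * (1 - u*(s^2)^r) * s^3 / ((1-s^2)^2 * (s^2)^(2*r+1)) * ((1-s^2) * (s^2)^r)
  field_simp
  ring

lemma Rw1m (hs : 0 < s) (hs1 : s ≠ 1) (m : ℕ) :
    w'f s t u m * ((1-s^2) * (s^2)^m) = wf s t u m * s * (1 - u*(s^2)^m) := by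
  have hs0 : s ≠ 0 := ne_of_gt hs
  have h1 := hq1' hs hs1
  rw [w'f]
  field_simp

lemma qPoch_succ (p x : ℝ) (n : ℕ) : qPoch p x (n+1) = qPoch p x n * (1 - x*p^n) :=
  Finset.prod_range_succ _ n

lemma qPoch_ne_zero {p x : ℝ} (h : ∀ i : ℕ, x * p^i ≠ 1) (n : ℕ) : qPoch p x n ≠ 0 := by
  rw [qPoch]
  apply Finset.prod_ne_zero_iff.mpr
  intro i _
  exact sub_ne_zero.mpr (Ne.symm (h i))

lemma wf_closed (hs : 0 < s) (hs1 : s ≠ 1) :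
    ∀ n, wf s t u n * ((s^2)^(n^2) * (1-s^2)^(2*n)) * (1-t) =
      qPoch (s^2) t (n+1) * qPoch (s^2) u n * s^(3*n) := by
  have hs0 : s ≠ 0 := ne_of_gt hs
  have h1 := hq1' hs hs1
  intro n
  induction n with
  | zero => simp [wf, qPoch]
  | succ n ih =>
    have hq2 : ((s:ℝ)^2)^(2*n+1) ≠ 0 := by positivity
    have hsucc : wf s t u (n+1) * ((1-s^2)^2 * (s^2)^(2*n+1)) =
        wf s t u n * (1 - t*(s^2)^(n+1)) * (1 - u*(s^2)^n) * s^3 := by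
      rw [show wf s t u (n+1) = wf s t u n * (1 - t*(s^2)^(n+1)) * (1 - u*(s^2)^n) * s^3 /
        ((1-s^2)^2 * (s^2)^(2*n+1)) from rfl]
      field_simp
    rw [qPoch_succ (s^2) t (n+1), qPoch_succ (s^2) u n]
    have hpow : ((s:ℝ)^2)^((n+1)^2) = (s^2)^(n^2) * (s^2)^(2*n+1) := by
      rw [← pow_add]; congr 1; ring
    rw [hpow]
    linear_combination ((s^2)^(n^2) * (1-s^2)^(2*n) * (1-t)) * hsucc +
      ((1 - t*(s^2)^(n+1)) * (1 - u*(s^2)^n) * s^3) * ih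
end Scalars
noncomputable def abarF (a : ℕ → ℝ) (c : ℕ) : ℝ := if c = 0 then 1 else a c

section Extract
variable {s t u : ℝ}

lemma Aco_mul (hs : 0 < s) (hs1 : s ≠ 1)
    (ht : ∀ i : ℕ, t * (s^2)^i ≠ 1) (hu : ∀ i : ℕ, u * (s^2)^i ≠ 1) (a : ℕ → ℝ)
    (n : ℕ) (hn : n ≠ 0) :
    Aco s t u a n * (qPoch (s^2) t n * qPoch (s^2) u n * s^(3*n)) =
      a n * (1-s^2)^(2*n) * (s^2)^(n^2) := by
  have hs0 : s ≠ 0 := ne_of_gt hs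
  have hPt := qPoch_ne_zero ht n
  have hPu := qPoch_ne_zero hu n
  have hsp : (s:ℝ)^(3*n) ≠ 0 := pow_ne_zero _ hs0
  rw [Aco, if_neg hn]
  field_simp

lemma habar (hs : 0 < s) (hs1 : s ≠ 1)
    (ht : ∀ i : ℕ, t * (s^2)^i ≠ 1) (hu : ∀ i : ℕ, u * (s^2)^i ≠ 1) (a : ℕ → ℝ) (n : ℕ) :
    abarF a n * (1 - t*(s^2)^n) = Aco s t u a n * wf s t u n * (1-t) := by
  rcases Nat.eq_zero_or_pos n with rfl | hn
  · simp [Aco, wf, abarF]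
  have hn0 : n ≠ 0 := by omega
  rw [show abarF a n = a n from if_neg hn0]
  have hcl := wf_closed (t := t) (u := u) hs hs1 n
  rw [qPoch_succ (s^2) t n] at hcl
  have hAM := Aco_mul hs hs1 ht hu a n hn0
  have hne : qPoch (s^2) t n * qPoch (s^2) u n * s^(3*n) ≠ 0 :=
    mul_ne_zero (mul_ne_zero (qPoch_ne_zero ht n) (qPoch_ne_zero hu n)) (pow_ne_zero _ (ne_of_gt hs))
  apply mul_right_cancel₀ hne
  linear_combination (-(wf s t u n * (1-t))) * hAM + (-(a n)) * hcl

lemma coeff_TU (hs : 0 < s) (a : ℕ → ℝ) (c : ℕ) :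
    PowerSeries.coeff (2*c) (qCoeffSeriesTU (s^2) t u a) = Aco s t u a c := by
  rw [qCoeffSeriesTU, PowerSeries.coeff_mk]
  rcases Nat.eq_zero_or_pos c with rfl | hc
  · simp [Aco]
  · rw [if_neg (by omega : ¬ 2*c = 0), if_pos (by omega : 2*c % 2 = 0),
      Nat.mul_div_cancel_left c (by norm_num : 0 < 2), Real.sqrt_sq hs.le,
      Aco, if_neg (by omega : ¬ c = 0)]

lemma coeff_TU_odd (a : ℕ → ℝ) (c : ℕ) :
    PowerSeries.coeff (2*c+1) (qCoeffSeriesTU (s^2) t u a) = 0 := by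
  rw [qCoeffSeriesTU, PowerSeries.coeff_mk, if_neg (by omega), if_neg (by omega)]

lemma coeff_cumArg_even (hs : 0 < s) (κ : ℕ → ℝ) (l : ℕ) :
    PowerSeries.coeff (2*l+2) (qCumulantArg (s^2) κ) =
      κ (l+1) / qNum (s^2) (l+1) * (s^2)^(l+1) / s := by
  rw [qCumulantArg, PowerSeries.coeff_mk, if_pos ⟨by omega, by omega⟩,
    show (2*l+2)/2 = l+1 by omega, Real.sqrt_sq hs.le]

lemma coeff_cumArg_odd (κ : ℕ → ℝ) (l : ℕ) :
    PowerSeries.coeff (2*l+1) (qCumulantArg (s^2) κ) = 0 := by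
  rw [qCumulantArg, PowerSeries.coeff_mk, if_neg (by rintro ⟨-, h2⟩; omega)]

lemma coeff_CS (a : ℕ → ℝ) (c : ℕ) :
    PowerSeries.coeff (2*c) (qCoeffSeries a) = (if c = 0 then 1 else a c) := by
  rw [qCoeffSeries, PowerSeries.coeff_mk]
  rcases Nat.eq_zero_or_pos c with rfl | hc
  · simp
  · rw [if_neg (by omega), if_pos (by omega : (2*c) % 2 = 0),
      Nat.mul_div_cancel_left c (by norm_num : 0 < 2), if_neg (by omega)]

lemma coeff_CS_ab (a : ℕ → ℝ) (c : ℕ) :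
    PowerSeries.coeff (2*c) (qCoeffSeries a) = abarF a c := coeff_CS a c

lemma coeff_CS_odd (a : ℕ → ℝ) (c : ℕ) :
    PowerSeries.coeff (2*c+1) (qCoeffSeries a) = 0 := by
  rw [qCoeffSeries, PowerSeries.coeff_mk, if_neg (by omega), if_neg (by omega)]

lemma coeff_momArg_even (m : ℕ → ℝ) (l : ℕ) :
    PowerSeries.coeff (2*l+2) (qMomentArg (s^2) t m) =
      (1-t)/(1-s^2) * (m (l+1) / qNum (s^2) (l+1)) := by
  rw [qMomentArg, PowerSeries.coeff_mk, if_pos ⟨by omega, by omega⟩,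
    show (2*l+2)/2 = l+1 by omega]

lemma coeff_momArg_odd (m : ℕ → ℝ) (l : ℕ) :
    PowerSeries.coeff (2*l+1) (qMomentArg (s^2) t m) = 0 := by
  rw [qMomentArg, PowerSeries.coeff_mk, if_neg (by rintro ⟨-, h2⟩; omega)]

lemma extract1 (hs : 0 < s) (hs1 : s ≠ 1) (κ a : ℕ → ℝ)
    (h1 : qExpComp s⁻¹ (qCumulantArg (s^2) κ) = qCoeffSeriesTU (s^2) t u a) (n : ℕ) :
    s * ((1 - (s^2)^(n+1)) * Aco s t u a (n+1)) =
      (1-s^2) * (s^2)^(n+1) * ∑ l ∈ Finset.range (n+1), κ (l+1) * Aco s t u a (n-l) := by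
  have hs0 : s ≠ 0 := ne_of_gt hs
  have hsm : s - 1 ≠ 0 := sub_ne_zero.mpr hs1
  have h1q := hq1' hs hs1
  have hp : (0:ℝ) < s⁻¹ := inv_pos.mpr hs
  have hp1 : s⁻¹ ≠ (1:ℝ) := fun h => hs1 (by rwa [inv_eq_one] at h)
  have hFE := qDeriv_qExpComp hp hp1 (qCumulantArg (s^2) κ)
  rw [h1] at hFE
  have hco := congrArg (PowerSeries.coeff (2*n+1)) hFE
  rw [coeff_qDeriv, PowerSeries.coeff_mul, Finset.Nat.sum_antidiagonal_eq_sum_range_succ_mk] at hco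
  rw [Nat.succ_eq_add_one] at hco
  rw [show 2*n+1+1 = 2*(n+1) by ring] at hco
  rw [coeff_TU hs a (n+1)] at hco
  rw [sumRange2 (n+1) _] at hco
  have hterm : ∀ l ∈ Finset.range (n+1),
      (PowerSeries.coeff (2*l) (qDeriv s⁻¹ (qCumulantArg (s^2) κ)) *
         PowerSeries.coeff (2*n+1-(2*l)) (qCoeffSeriesTU (s^2) t u a)
       + PowerSeries.coeff (2*l+1) (qDeriv s⁻¹ (qCumulantArg (s^2) κ)) *
         PowerSeries.coeff (2*n+1-(2*l+1)) (qCoeffSeriesTU (s^2) t u a))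
      = qNum s⁻¹ (2*l+2) * (κ (l+1) / qNum (s^2) (l+1) * (s^2)^(l+1) / s) * Aco s t u a (n-l) := by
    intro l hl
    rw [coeff_qDeriv, coeff_qDeriv, coeff_cumArg_odd]
    rw [show 2*l+1+1 = 2*l+2 by ring, coeff_cumArg_even hs κ l]
    rw [show 2*n+1-(2*l+1) = 2*(n-l) by simp only [Finset.mem_range] at hl; omega]
    rw [coeff_TU hs a (n-l)]
    ring
  rw [Finset.sum_congr rfl hterm] at hco
  calc s * ((1 - (s^2)^(n+1)) * Aco s t u a (n+1))
      = (-(s-1)*(s^2)^(n+1)) * (qNum s⁻¹ (2*(n+1)) * Aco s t u a (n+1)) := by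
        rw [qNum_inv_eq hs hs1]
        simp only [inv_pow]
        field_simp
        ring
    _ = (-(s-1)*(s^2)^(n+1)) * ∑ l ∈ Finset.range (n+1),
          qNum s⁻¹ (2*l+2) * (κ (l+1) / qNum (s^2) (l+1) * (s^2)^(l+1) / s) * Aco s t u a (n-l) := by
        rw [hco]
    _ = ∑ l ∈ Finset.range (n+1), (1-s^2) * (s^2)^(n+1) * (κ (l+1) * Aco s t u a (n-l)) := by
        rw [Finset.mul_sum]
        apply Finset.sum_congr rfl
        intro l _
        have hql := hqpow' hs hs1 (l+1) (by omega)
        rw [qNum_inv_eq hs hs1, qNum]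
        simp only [inv_pow]
        field_simp
        ring
    _ = (1-s^2) * (s^2)^(n+1) * ∑ l ∈ Finset.range (n+1), κ (l+1) * Aco s t u a (n-l) := by
        rw [Finset.mul_sum]

lemma extract2 (hs : 0 < s) (hs1 : s ≠ 1) (m a : ℕ → ℝ)
    (h2 : qExpComp s⁻¹ (qMomentArg (s^2) t m) = qCoeffSeries a) (n : ℕ) :
    (1 - (s^2)^(n+1)) * a (n+1) =
      (1-t) * ∑ l ∈ Finset.range (n+1),
        (s^2)^(n-l) * m (l+1) * abarF a (n-l) := by
  have hs0 : s ≠ 0 := ne_of_gt hs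
  have hsm : s - 1 ≠ 0 := sub_ne_zero.mpr hs1
  have h1q := hq1' hs hs1
  have hp : (0:ℝ) < s⁻¹ := inv_pos.mpr hs
  have hp1 : s⁻¹ ≠ (1:ℝ) := fun h => hs1 (by rwa [inv_eq_one] at h)
  have hFE := qDeriv_qExpComp hp hp1 (qMomentArg (s^2) t m)
  rw [h2] at hFE
  have hco := congrArg (PowerSeries.coeff (2*n+1)) hFE
  rw [coeff_qDeriv, PowerSeries.coeff_mul, Finset.Nat.sum_antidiagonal_eq_sum_range_succ_mk] at hco
  rw [Nat.succ_eq_add_one] at hco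
  rw [show 2*n+1+1 = 2*(n+1) by ring] at hco
  rw [coeff_CS_ab a (n+1), show abarF a (n+1) = a (n+1) from if_neg (Nat.succ_ne_zero n)] at hco
  rw [sumRange2 (n+1) _] at hco
  have hterm : ∀ l ∈ Finset.range (n+1),
      (PowerSeries.coeff (2*l) (qDeriv s⁻¹ (qMomentArg (s^2) t m)) *
         PowerSeries.coeff (2*n+1-(2*l)) (qCoeffSeries a)
       + PowerSeries.coeff (2*l+1) (qDeriv s⁻¹ (qMomentArg (s^2) t m)) *
         PowerSeries.coeff (2*n+1-(2*l+1)) (qCoeffSeries a))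
      = qNum s⁻¹ (2*l+2) * ((1-t)/(1-s^2) * (m (l+1) / qNum (s^2) (l+1))) *
          abarF a (n-l) := by
    intro l hl
    rw [coeff_qDeriv, coeff_qDeriv, coeff_momArg_odd]
    rw [show 2*l+1+1 = 2*l+2 by ring, coeff_momArg_even m l]
    rw [show 2*n+1-(2*l+1) = 2*(n-l) by simp only [Finset.mem_range] at hl; omega]
    rw [coeff_CS_ab a (n-l)]
    ring
  rw [Finset.sum_congr rfl hterm] at hco
  apply mul_left_cancel₀ hs0
  calc s * ((1 - (s^2)^(n+1)) * a (n+1))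
      = (-(s-1)*(s^2)^(n+1)) * (qNum s⁻¹ (2*(n+1)) * a (n+1)) := by
        rw [qNum_inv_eq hs hs1]
        simp only [inv_pow]
        field_simp
        ring
    _ = (-(s-1)*(s^2)^(n+1)) * ∑ l ∈ Finset.range (n+1),
          qNum s⁻¹ (2*l+2) * ((1-t)/(1-s^2) * (m (l+1) / qNum (s^2) (l+1))) *
            abarF a (n-l) := by rw [hco]
    _ = ∑ l ∈ Finset.range (n+1), s * ((1-t) * ((s^2)^(n-l) * m (l+1) * abarF a (n-l))) := by
        rw [Finset.mul_sum]
        apply Finset.sum_congr rfl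
        intro l hl
        have hql := hqpow' hs hs1 (l+1) (by omega)
        have hpow : ((s:ℝ)^2)^(n+1) = (s^2)^(n-l) * (s^2)^(l+1) := by
          rw [← pow_add]; congr 1; simp only [Finset.mem_range] at hl; omega
        rw [qNum_inv_eq hs hs1, qNum, hpow]
        simp only [inv_pow]
        field_simp
        ring
    _ = s * ((1-t) * ∑ l ∈ Finset.range (n+1),
          (s^2)^(n-l) * m (l+1) * abarF a (n-l)) := by
        rw [Finset.mul_sum, Finset.mul_sum]
end Extract
section TowerSec
variable {s t u : ℝ}

lemma Wf_succ_trunc (κ : ℕ → ℝ) (j i C : ℕ) (hC : j ≤ 2*C) :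
    Wf s t u κ (j+1) i = (if i = 0 then 0 else dwf s t u i * Wf s t u κ j (i-1))
      + ∑ l ∈ Finset.range C, s * (s⁻¹)^i * κ (l+1) * Wf s t u κ j (i + 2*l + 1) := by
  rw [Wf_succ]
  congr 1
  rcases le_total (j+1) C with h | h
  · apply Finset.sum_subset (Finset.range_subset_range.mpr h)
    intro l _ hl
    rw [Wf_vanish s t u κ j (i+2*l+1) (by simp only [Finset.mem_range] at hl; omega), mul_zero]
  · symm
    apply Finset.sum_subset (Finset.range_subset_range.mpr h)
    intro l hl1 hl
    rw [Wf_vanish s t u κ j (i+2*l+1) (by simp only [Finset.mem_range] at hl1 hl ⊢; omega), mul_zero]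

lemma dwf_even (n : ℕ) :
    dwf s t u (2*n) = s^2 * (s⁻¹)^(2*n) * ((1 - t*(s^2)^n)/(1-s^2)) := by
  rw [dwf, if_neg (by omega), show (2*n)/2 = n by omega]

lemma dwf_odd (n : ℕ) :
    dwf s t u (2*n+1) = s^2 * (s⁻¹)^(2*n+1) * ((1 - u*(s^2)^n)/(1-s^2)) := by
  rw [dwf, if_pos (by omega), show (2*n+1-1)/2 = n by omega]

lemma Aco_zero (a : ℕ → ℝ) : Aco s t u a 0 = 1 := by rw [Aco]; simp

lemma wf_zero' : wf s t u 0 = 1 := rfl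

lemma tower (κ a abar : ℕ → ℝ) (hs : 0 < s) (hs1 : s ≠ 1)
    (htnz : ∀ i : ℕ, (1:ℝ) - t*(s^2)^i ≠ 0)
    (habar0 : abar 0 = 1)
    (hab : ∀ n, abar n * (1 - t*(s^2)^n) = Aco s t u a n * wf s t u n * (1-t))
    (hE1 : ∀ n : ℕ, s * ((1 - (s^2)^(n+1)) * Aco s t u a (n+1)) =
      (1-s^2) * (s^2)^(n+1) * ∑ l ∈ Finset.range (n+1), κ (l+1) * Aco s t u a (n-l)) :
    ∀ r : ℕ,
      (∀ n, ∑ c ∈ Finset.range (r+1), Wf s t u κ (2*c) (2*n) * (abar (r-c) * (s^2)^(r-c))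
        = if n ≤ r then Aco s t u a (r-n) * wf s t u r else 0)
      ∧ (∀ n, ∑ c ∈ Finset.range (r+1), Wf s t u κ (2*c+1) (2*n+1) * (abar (r-c) * (s^2)^(r-c))
        = if n ≤ r then Aco s t u a (r-n) * w'f s t u r else 0) := by
  have hs0 : s ≠ 0 := ne_of_gt hs
  have hq1 := hq1' hs hs1
  intro r
  induction r with
  | zero =>
    constructor
    · intro n
      rw [Finset.sum_range_one]
      rw [show (2:ℕ)*0 = 0 by norm_num, Wf_zero]
      rcases Nat.eq_zero_or_pos n with rfl | hn
      · simp [habar0, Aco_zero, wf_zero']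
      · rw [if_neg (by omega), if_neg (by omega)]
        ring
    · intro n
      rw [Finset.sum_range_one]
      rw [show (2:ℕ)*0+1 = 0+1 by norm_num, Wf_succ, Finset.sum_range_one,
        if_neg (by omega : ¬ 2*n+1 = 0), show 2*n+1-1 = 2*n by omega, Wf_zero,
        show 2*n+1+2*0+1 = 2*n+2 by omega, Wf_zero, if_neg (by omega : ¬ 2*n+2 = 0)]
      rcases Nat.eq_zero_or_pos n with rfl | hn
      · norm_num [habar0, Aco_zero, w'f, wf_zero', dwf]
        have hq1 := hq1' hs hs1
        field_simp
      · rw [if_neg (by omega : ¬ 2*n = 0), if_neg (by omega : ¬ n ≤ 0)]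
        ring
  | succ r ih =>
    obtain ⟨ihX, ihY⟩ := ih
    have hX : ∀ n, ∑ c ∈ Finset.range (r+1+1), Wf s t u κ (2*c) (2*n) * (abar (r+1-c) * (s^2)^(r+1-c))
        = if n ≤ r+1 then Aco s t u a (r+1-n) * wf s t u (r+1) else 0 := by
      intro n
      rw [Finset.sum_range_succ']
      have hWexp : ∀ c ∈ Finset.range (r+1),
          Wf s t u κ (2*(c+1)) (2*n) * (abar (r+1-(c+1)) * (s^2)^(r+1-(c+1)))
          = (if 2*n = 0 then 0 else dwf s t u (2*n) * (Wf s t u κ (2*c+1) (2*n-1) * (abar (r-c) * (s^2)^(r-c))))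
            + ∑ l ∈ Finset.range (r+1), (s*(s⁻¹)^(2*n)*κ (l+1)) *
                (Wf s t u κ (2*c+1) (2*n+2*l+1) * (abar (r-c) * (s^2)^(r-c))) := by
        intro c hc
        rw [show 2*(c+1) = (2*c+1)+1 by ring,
          Wf_succ_trunc κ (2*c+1) (2*n) (r+1) (by simp only [Finset.mem_range] at hc; omega),
          show r+1-(c+1) = r-c by omega, add_mul, Finset.sum_mul]
        congr 1
        · split_ifs with h
          · rw [zero_mul]
          · ring
        · apply Finset.sum_congr rfl; intro l _; ring
      rw [Finset.sum_congr rfl hWexp, Finset.sum_add_distrib, Finset.sum_comm]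
      rcases Nat.eq_zero_or_pos n with rfl | hn
      · -- n = 0 case
        simp only [Nat.mul_zero, Wf_zero, ite_self, ↓reduceIte, Finset.sum_const_zero, zero_add,
          pow_zero, Nat.zero_add, Nat.sub_zero, one_mul, mul_one]
        have hup : ∀ l ∈ Finset.range (r+1),
            ∑ c ∈ Finset.range (r+1), s * κ (l+1) *
              (Wf s t u κ (2*c+1) (2*l+1) * (abar (r-c) * (s^2)^(r-c)))
            = (s*κ (l+1)) * (if l ≤ r then Aco s t u a (r-l) * w'f s t u r else 0) := by
          intro l _
          rw [← Finset.mul_sum, ihY l]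
        rw [Finset.sum_congr rfl hup]
        have hup2 : ∑ l ∈ Finset.range (r+1), (s*κ (l+1)) * (if l ≤ r then Aco s t u a (r-l) * w'f s t u r else 0)
            = (∑ l ∈ Finset.range (r+1), κ (l+1) * Aco s t u a (r-l)) * (s * w'f s t u r) := by
          rw [Finset.sum_mul]
          apply Finset.sum_congr rfl
          intro l hl
          rw [if_pos (by simp only [Finset.mem_range] at hl; omega)]
          ring
        rw [hup2]
        rw [if_pos (Nat.zero_le _)]
        have hq2 : ((s:ℝ)^2) ≠ 0 := pow_ne_zero 2 hs0
        have htz := htnz (r+1)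
        have hQRne : ((s:ℝ)^2)^(r+1) ≠ 0 := pow_ne_zero _ hq2
        have hQrne : ((s:ℝ)^2)^r ≠ 0 := pow_ne_zero _ hq2
        have hS : (∑ l ∈ Finset.range (r+1), κ (l+1) * Aco s t u a (r-l))
            = s*((1 - (s^2)^(r+1)) * Aco s t u a (r+1)) / ((1-s^2)*(s^2)^(r+1)) := by
          rw [eq_div_iff (mul_ne_zero hq1 hQRne)]
          linear_combination -(hE1 r)
        have hw' : w'f s t u r = wf s t u (r+1) * ((1-s^2)*(s^2)^r) / (1 - t*(s^2)^(r+1)) := by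
          rw [eq_div_iff htz]; exact Rw2 hs hs1 r
        have hab' : abar (r+1) = Aco s t u a (r+1) * wf s t u (r+1) * (1-t) / (1 - t*(s^2)^(r+1)) := by
          rw [eq_div_iff htz]; exact hab (r+1)
        rw [hS, hw', hab']
        field_simp
        rw [div_eq_iff (by rwa [mul_comm] at htz)]
        ring
      · -- n ≥ 1
        rw [show (2:ℕ)*0 = 0 by norm_num, Wf_zero]
        rw [if_neg (show ¬ (2*n = 0) by omega), zero_mul, add_zero]
        simp only [if_neg (show ¬ (2*n = 0) by omega)]
        have hdown : ∑ c ∈ Finset.range (r+1),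
            dwf s t u (2*n) * (Wf s t u κ (2*c+1) (2*n-1) * (abar (r-c) * (s^2)^(r-c)))
            = dwf s t u (2*n) * (if n-1 ≤ r then Aco s t u a (r-(n-1)) * w'f s t u r else 0) := by
          rw [← Finset.mul_sum]
          congr 1
          rw [show 2*n-1 = 2*(n-1)+1 by omega]
          exact ihY (n-1)
        have hup : ∀ l ∈ Finset.range (r+1),
            ∑ c ∈ Finset.range (r+1), (s*(s⁻¹)^(2*n)*κ (l+1)) *
              (Wf s t u κ (2*c+1) (2*n+2*l+1) * (abar (r-c) * (s^2)^(r-c)))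
            = (s*(s⁻¹)^(2*n)*κ (l+1)) * (if n+l ≤ r then Aco s t u a (r-(n+l)) * w'f s t u r else 0) := by
          intro l _
          rw [← Finset.mul_sum, show 2*n+2*l+1 = 2*(n+l)+1 by ring, ihY (n+l)]
        rw [hdown, Finset.sum_congr rfl hup]
        by_cases hnr : n ≤ r+1
        · rw [if_pos hnr, if_pos (by omega : n-1 ≤ r)]
          by_cases hnr2 : n ≤ r
          · -- main case
            have hup3 : ∑ l ∈ Finset.range (r+1), (s*(s⁻¹)^(2*n)*κ (l+1)) *
                (if n+l ≤ r then Aco s t u a (r-(n+l)) * w'f s t u r else 0)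
                = (∑ l ∈ Finset.range (r-n+1), κ (l+1) * Aco s t u a (r-n-l)) * (s*(s⁻¹)^(2*n) * w'f s t u r) := by
              rw [Finset.sum_mul]
              rw [show Finset.range (r+1) = Finset.range (r-n+1) ∪ Finset.Ico (r-n+1) (r+1) from by
                rw [Finset.range_eq_Ico, Finset.range_eq_Ico]
                exact (Finset.Ico_union_Ico_eq_Ico (a := 0) (b := r-n+1) (c := r+1) (by omega) (by omega)).symm]
              rw [Finset.sum_union (by
                rw [Finset.range_eq_Ico]
                exact Finset.Ico_disjoint_Ico_consecutive 0 (r-n+1) (r+1))]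
              have h2 : ∑ l ∈ Finset.Ico (r-n+1) (r+1), (s*(s⁻¹)^(2*n)*κ (l+1)) *
                  (if n+l ≤ r then Aco s t u a (r-(n+l)) * w'f s t u r else 0) = 0 := by
                apply Finset.sum_eq_zero
                intro l hl
                rw [if_neg (by simp only [Finset.mem_Ico] at hl; omega), mul_zero]
              rw [h2, add_zero]
              apply Finset.sum_congr rfl
              intro l hl
              rw [if_pos (by simp only [Finset.mem_range] at hl; omega),
                show r-(n+l) = r-n-l by omega]
              ring
            rw [hup3]
            rw [show r - (n-1) = (r-n)+1 by omega]
            have hE := hE1 (r-n)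
            rw [show r-n+1 = r+1-n by omega] at hE ⊢
            have hq2 : ((s:ℝ)^2) ≠ 0 := pow_ne_zero 2 hs0
            have htz := htnz (r+1)
            have hQRne : ((s:ℝ)^2)^(r+1) ≠ 0 := pow_ne_zero _ hq2
            have hQrne : ((s:ℝ)^2)^r ≠ 0 := pow_ne_zero _ hq2
            have hQnne : ((s:ℝ)^2)^n ≠ 0 := pow_ne_zero _ hq2
            have hQMne : ((s:ℝ)^2)^(r+1-n) ≠ 0 := pow_ne_zero _ hq2
            have hS : (∑ l ∈ Finset.range (r+1-n), κ (l+1) * Aco s t u a (r-n-l))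
                = s*((1 - (s^2)^(r+1-n)) * Aco s t u a (r+1-n)) / ((1-s^2)*(s^2)^(r+1-n)) := by
              rw [eq_div_iff (mul_ne_zero hq1 hQMne)]
              linear_combination -hE
            have hw' : w'f s t u r = wf s t u (r+1) * ((1-s^2)*(s^2)^r) / (1 - t*(s^2)^(r+1)) := by
              rw [eq_div_iff htz]; exact Rw2 hs hs1 r
            have hQM : ((s:ℝ)^2)^(r+1-n) = (s^2)^(r+1) / (s^2)^n := by
              rw [eq_div_iff hQnne, ← pow_add]; congr 1; omega
            rw [dwf_even, hS, hw', hQM]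
            simp only [inv_pow]
            field_simp
            ring
          · -- n = r+1
            have hnr3 : n = r+1 := by omega
            have hup4 : ∑ l ∈ Finset.range (r+1), (s*(s⁻¹)^(2*n)*κ (l+1)) *
                (if n+l ≤ r then Aco s t u a (r-(n+l)) * w'f s t u r else 0) = 0 := by
              apply Finset.sum_eq_zero
              intro l _
              rw [if_neg (by omega), mul_zero]
            rw [hup4, add_zero, show r-(n-1) = 0 by omega, show r+1-n = 0 by omega, Aco_zero]
            subst hnr3
            have hq2 : ((s:ℝ)^2) ≠ 0 := pow_ne_zero 2 hs0
            have htz := htnz (r+1)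
            have hQrne : ((s:ℝ)^2)^r ≠ 0 := pow_ne_zero _ hq2
            have hw' : w'f s t u r = wf s t u (r+1) * ((1-s^2)*(s^2)^r) / (1 - t*(s^2)^(r+1)) := by
              rw [eq_div_iff htz]; exact Rw2 hs hs1 r
            rw [dwf_even, hw']
            simp only [inv_pow]
            field_simp
            ring
        · rw [if_neg hnr, if_neg (by omega : ¬ n-1 ≤ r)]
          rw [mul_zero, zero_add]
          apply Finset.sum_eq_zero
          intro l _
          rw [if_neg (by omega), mul_zero]
    refine ⟨hX, ?_⟩
    intro n
    have hWexp : ∀ c ∈ Finset.range (r+2),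
        Wf s t u κ (2*c+1) (2*n+1) * (abar (r+1-c) * (s^2)^(r+1-c))
        = dwf s t u (2*n+1) * (Wf s t u κ (2*c) (2*n) * (abar (r+1-c) * (s^2)^(r+1-c)))
          + ∑ l ∈ Finset.range (r+1), (s*(s⁻¹)^(2*n+1)*κ (l+1)) *
              (Wf s t u κ (2*c) (2*(n+l+1)) * (abar (r+1-c) * (s^2)^(r+1-c))) := by
      intro c hc
      rw [Wf_succ_trunc κ (2*c) (2*n+1) (r+1) (by simp only [Finset.mem_range] at hc; omega),
        if_neg (by omega : ¬ 2*n+1 = 0), show 2*n+1-1 = 2*n by omega, add_mul, Finset.sum_mul]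
      congr 1
      · ring
      · apply Finset.sum_congr rfl
        intro l _
        rw [show 2*n+1+2*l+1 = 2*(n+l+1) by ring]
        ring
    rw [Finset.sum_congr rfl hWexp, Finset.sum_add_distrib, Finset.sum_comm, ← Finset.mul_sum]
    rw [hX n]
    have hup : ∀ l ∈ Finset.range (r+1),
        ∑ c ∈ Finset.range (r+2), (s*(s⁻¹)^(2*n+1)*κ (l+1)) *
          (Wf s t u κ (2*c) (2*(n+l+1)) * (abar (r+1-c) * (s^2)^(r+1-c)))
        = (s*(s⁻¹)^(2*n+1)*κ (l+1)) * (if n+l+1 ≤ r+1 then Aco s t u a (r+1-(n+l+1)) * wf s t u (r+1) else 0) := by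
      intro l _
      rw [← Finset.mul_sum, hX (n+l+1)]
    rw [Finset.sum_congr rfl hup]
    by_cases hnr : n ≤ r+1
    · rw [if_pos hnr]
      by_cases hnr2 : n ≤ r
      · have hup3 : ∑ l ∈ Finset.range (r+1), (s*(s⁻¹)^(2*n+1)*κ (l+1)) *
            (if n+l+1 ≤ r+1 then Aco s t u a (r+1-(n+l+1)) * wf s t u (r+1) else 0)
            = (∑ l ∈ Finset.range (r-n+1), κ (l+1) * Aco s t u a (r-n-l)) * (s*(s⁻¹)^(2*n+1) * wf s t u (r+1)) := by
          rw [Finset.sum_mul]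
          rw [show Finset.range (r+1) = Finset.range (r-n+1) ∪ Finset.Ico (r-n+1) (r+1) from by
            rw [Finset.range_eq_Ico, Finset.range_eq_Ico]
            exact (Finset.Ico_union_Ico_eq_Ico (a := 0) (b := r-n+1) (c := r+1) (by omega) (by omega)).symm]
          rw [Finset.sum_union (by
            rw [Finset.range_eq_Ico]
            exact Finset.Ico_disjoint_Ico_consecutive 0 (r-n+1) (r+1))]
          have h2 : ∑ l ∈ Finset.Ico (r-n+1) (r+1), (s*(s⁻¹)^(2*n+1)*κ (l+1)) *
              (if n+l+1 ≤ r+1 then Aco s t u a (r+1-(n+l+1)) * wf s t u (r+1) else 0) = 0 := by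
            apply Finset.sum_eq_zero
            intro l hl
            rw [if_neg (by simp only [Finset.mem_Ico] at hl; omega), mul_zero]
          rw [h2, add_zero]
          apply Finset.sum_congr rfl
          intro l hl
          rw [if_pos (by simp only [Finset.mem_range] at hl; omega),
            show r+1-(n+l+1) = r-n-l by omega]
          ring
        rw [hup3, if_pos hnr]
        have hE := hE1 (r-n)
        rw [show r-n+1 = r+1-n by omega] at hE ⊢
        have hq2 : ((s:ℝ)^2) ≠ 0 := pow_ne_zero 2 hs0
        have hQRne : ((s:ℝ)^2)^(r+1) ≠ 0 := pow_ne_zero _ hq2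
        have hQnne : ((s:ℝ)^2)^n ≠ 0 := pow_ne_zero _ hq2
        have hQMne : ((s:ℝ)^2)^(r+1-n) ≠ 0 := pow_ne_zero _ hq2
        have hS : (∑ l ∈ Finset.range (r+1-n), κ (l+1) * Aco s t u a (r-n-l))
            = s*((1 - (s^2)^(r+1-n)) * Aco s t u a (r+1-n)) / ((1-s^2)*(s^2)^(r+1-n)) := by
          rw [eq_div_iff (mul_ne_zero hq1 hQMne)]
          linear_combination -hE
        have hQM : ((s:ℝ)^2)^(r+1-n) = (s^2)^(r+1) / (s^2)^n := by
          rw [eq_div_iff hQnne, ← pow_add]; congr 1; omega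
        rw [dwf_odd, hS, hQM, w'f]
        simp only [inv_pow]
        field_simp
        ring
      · have hnr3 : n = r+1 := by omega
        have hup4 : ∑ l ∈ Finset.range (r+1), (s*(s⁻¹)^(2*n+1)*κ (l+1)) *
            (if n+l+1 ≤ r+1 then Aco s t u a (r+1-(n+l+1)) * wf s t u (r+1) else 0) = 0 := by
          apply Finset.sum_eq_zero
          intro l _
          rw [if_neg (by omega), mul_zero]
        rw [hup4, add_zero, if_pos hnr, show r+1-n = 0 by omega, Aco_zero]
        subst hnr3
        have hq2 : ((s:ℝ)^2) ≠ 0 := pow_ne_zero 2 hs0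
        have hQRne : ((s:ℝ)^2)^(r+1) ≠ 0 := pow_ne_zero _ hq2
        rw [dwf_odd, w'f]
        simp only [inv_pow]
        field_simp
        ring
    · rw [if_neg hnr, if_neg hnr]
      rw [mul_zero, zero_add]
      apply Finset.sum_eq_zero
      intro l _
      rw [if_neg (by omega), mul_zero]
end TowerSec

/-- Theorem 6.1(a): the `qq`-analogue of the operator formula for moments:
`m_{2k} = qq^{1/2} [z^0] (qq Δ_{qq;t,u} T_{qq^{-1/2}} + qq^{1/2} *_g T_{qq^{-1/2}})^{2k-1} g(z)`,
where `T_{qq^{-1/2}} f(z) = f(qq^{-1/2} z)` is implemented by `PowerSeries.rescale`. -/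
theorem q_moments_via_operator (qq t u : ℝ) (hqq : 0 < qq) (hqq1 : qq ≠ 1)
    (ht : ∀ i : ℕ, t * qq ^ i ≠ 1) (hu : ∀ i : ℕ, u * qq ^ i ≠ 1)
    (a κ m : ℕ → ℝ)
    (h1 : qExpComp (Real.sqrt qq)⁻¹ (qCumulantArg qq κ) = qCoeffSeriesTU qq t u a)
    (h2 : qExpComp (Real.sqrt qq)⁻¹ (qMomentArg qq t m) = qCoeffSeries a) :
    ∀ k : ℕ, 1 ≤ k →
      m k = Real.sqrt qq * PowerSeries.constantCoeff
        ((fun f => qq • DeltaQTU qq t u (PowerSeries.rescale (Real.sqrt qq)⁻¹ f) +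
            Real.sqrt qq • (gSeries κ * PowerSeries.rescale (Real.sqrt qq)⁻¹ f))^[2 * k - 1]
          (gSeries κ)) := by
  obtain ⟨s, hs, rfl⟩ : ∃ s : ℝ, 0 < s ∧ s^2 = qq :=
    ⟨Real.sqrt qq, Real.sqrt_pos.mpr hqq, Real.sq_sqrt hqq.le⟩
  rw [Real.sqrt_sq hs.le] at h1 h2 ⊢
  have hs0 : s ≠ 0 := ne_of_gt hs
  have hs1 : s ≠ 1 := fun h => hqq1 (by rw [h]; norm_num)
  have hq1 := hq1' hs hs1
  have htnz : ∀ i : ℕ, (1:ℝ) - t*(s^2)^i ≠ 0 := fun i => sub_ne_zero.mpr (Ne.symm (ht i))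
  have h1t : (1:ℝ) - t ≠ 0 := by have := htnz 0; simpa using this
  have hE1 := extract1 hs hs1 κ a h1
  have hab := habar hs hs1 ht hu a
  have tw := tower κ a (abarF a) hs hs1 htnz rfl hab hE1
  -- moment recurrence for walk numbers
  have hMM : ∀ n : ℕ, (1 - (s^2)^(n+1)) * a (n+1) =
      (1-t) * ∑ l ∈ Finset.range (n+1), (s^2)^(n-l) * Wf s t u κ (2*(l+1)) 0 * abarF a (n-l) := by
    intro n
    have hT := (tw (n+1)).1 0
    rw [if_pos (Nat.zero_le _), Nat.sub_zero] at hT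
    simp only [Nat.mul_zero] at hT
    rw [Finset.sum_range_succ'] at hT
    rw [Wf_zero, if_pos rfl, Nat.sub_zero] at hT
    have hsc : ∀ c ∈ Finset.range (n+1),
        Wf s t u κ (2*(c+1)) 0 * (abarF a (n+1-(c+1)) * (s^2)^(n+1-(c+1)))
        = Wf s t u κ (2*(c+1)) 0 * (abarF a (n-c) * (s^2)^(n-c)) := by
      intro c _
      rw [show n+1-(c+1) = n-c by omega]
    rw [Finset.sum_congr rfl hsc] at hT
    have hsum : ∑ l ∈ Finset.range (n+1), (s^2)^(n-l) * Wf s t u κ (2*(l+1)) 0 * abarF a (n-l)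
        = ∑ c ∈ Finset.range (n+1), Wf s t u κ (2*(c+1)) 0 * (abarF a (n-c) * (s^2)^(n-c)) := by
      apply Finset.sum_congr rfl
      intro l _
      ring
    rw [hsum]
    have habs : abarF a (n+1) = a (n+1) := if_neg (Nat.succ_ne_zero n)
    linear_combination (-(1-t)) * hT + hab (n+1) + (-(1-(s^2)^(n+1))) * habs
  -- m equals walk numbers
  have hmEq : ∀ k : ℕ, 1 ≤ k → m k = Wf s t u κ (2*k) 0 := by
    intro k
    induction k using Nat.strong_induction_on with
    | _ k IH =>
      intro hk
      obtain ⟨n, rfl⟩ : ∃ n, k = n+1 := ⟨k-1, by omega⟩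
      have h2e := extract2 hs hs1 m a h2 n
      have hMMe := hMM n
      have hsum : ∑ l ∈ Finset.range (n+1),
          (s^2)^(n-l) * (m (l+1) - Wf s t u κ (2*(l+1)) 0) * abarF a (n-l)
          = m (n+1) - Wf s t u κ (2*(n+1)) 0 := by
        rw [Finset.sum_eq_single_of_mem n (Finset.self_mem_range_succ n)]
        · rw [Nat.sub_self]
          simp [abarF]
        · intro l hl hln
          have hml : m (l+1) = Wf s t u κ (2*(l+1)) 0 :=
            IH (l+1) (by simp only [Finset.mem_range] at hl; omega) (by omega)
          rw [hml, sub_self, mul_zero, zero_mul]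
      have hz : (1-t) * (m (n+1) - Wf s t u κ (2*(n+1)) 0) = 0 := by
        rw [← hsum]
        have hexp : (1-t) * ∑ l ∈ Finset.range (n+1),
            (s^2)^(n-l) * (m (l+1) - Wf s t u κ (2*(l+1)) 0) * abarF a (n-l)
            = (1-t) * (∑ l ∈ Finset.range (n+1), (s^2)^(n-l) * m (l+1) * abarF a (n-l))
              - (1-t) * (∑ l ∈ Finset.range (n+1), (s^2)^(n-l) * Wf s t u κ (2*(l+1)) 0 * abarF a (n-l)) := by
          rw [← mul_sub, ← Finset.sum_sub_distrib]
          congr 1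
          apply Finset.sum_congr rfl
          intro l _
          ring
        rw [hexp, ← h2e, ← hMMe, sub_self]
      rcases mul_eq_zero.mp hz with h | h
      · exact absurd h h1t
      · exact sub_eq_zero.mp h
  -- conclude
  intro k hk
  rw [hmEq k hk]
  rw [opIter s t u κ (2*k-1) (gSeries κ)]
  have hg : ∀ i ∈ Finset.range (2*k-1+1),
      Wf s t u κ (2*k-1) i * PowerSeries.coeff i (gSeries κ)
      = Wf s t u κ (2*k-1) i * gco κ (i - 0) := by
    intro i _
    rw [coeff_gSeries, Nat.sub_zero]
  rw [Finset.sum_congr rfl hg]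
  rw [gsum s t u κ (2*k-1) 0 (Nat.zero_le _)]
  have hW : Wf s t u κ (2*k) 0 = ∑ l ∈ Finset.range (2*k-1+1),
      s * (s⁻¹)^(0:ℕ) * κ (l+1) * Wf s t u κ (2*k-1) (0+2*l+1) := by
    conv_lhs => rw [show 2*k = (2*k-1)+1 by omega]
    rw [Wf_succ, if_pos rfl, zero_add]
  rw [hW, Finset.mul_sum]
  apply Finset.sum_congr rfl
  intro l _
  rw [pow_zero]
  ring
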